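/- Let 1 ≤ q < 2. There exists a constant c > 0 depending only on q such that for every real Banach space V, every continuous path X : [0,1] → V of finite q-variation, and every finite partition P of [0,1], the piecewise linear approximation satisfies ‖π_P X‖_q ≤ c ‖X‖_q. -/

import Mathlib

/-!
STATEMENT 0: uniform boundedness of piecewise linear approximation in `q`-variation norm.
-/

open scoped ENNReal

universe u

/-- A finite partition of the interval `[s,t]`: monotone points `pt 0 = s ≤ pt 1 ≤ ⋯ ≤ pt N = t`. -/
structure Subdivision (s t : ℝ) where
  N : ℕ
  pt : ℕ → ℝ
  pos : 0 < N
  first : pt 0 = s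
  last : pt N = t
  mono : ∀ i, i < N → pt i ≤ pt (i + 1)

/-- The mesh of a partition: the largest length of a subinterval. -/
noncomputable def Subdivision.mesh {s t : ℝ} (P : Subdivision s t) : ℝ :=
  (Finset.range P.N).sup' (Finset.nonempty_range_iff.mpr P.pos.ne')
    (fun i => P.pt (i + 1) - P.pt i)

/-- The `q`-variation norm of a path `X : [0,1] → V`, as a value in `[0,∞]`:
`sup_D (∑ ‖X(t_i) - X(t_{i-1})‖^q)^(1/q)` over all finite partitions `D` of `[0,1]`. -/
noncomputable def qVar {V : Type u} [NormedAddCommGroup V] (q : ℝ) (X : ℝ → V) : ℝ≥0∞ :=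
  ⨆ P : Subdivision 0 1,
    ENNReal.ofReal
      ((∑ i ∈ Finset.range P.N, ‖X (P.pt (i + 1)) - X (P.pt i)‖ ^ q) ^ (1 / q))

/-- `Y` is the piecewise linear approximation of the path `X` along the partition `P`:
`Y (pt i) = X (pt i)` and `Y` is affine on each subinterval `[pt i, pt (i+1)]`. -/
def IsPiecewiseLinearApprox {V : Type u} [NormedAddCommGroup V] [Module ℝ V]
    (P : Subdivision 0 1) (X Y : ℝ → V) : Prop :=
  ∀ i, i < P.N → ∀ u, P.pt i ≤ u → u ≤ P.pt (i + 1) →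
    Y u = X (P.pt i)
      + ((u - P.pt i) / (P.pt (i + 1) - P.pt i)) • (X (P.pt (i + 1)) - X (P.pt i))

namespace Subdivision

lemma pt_le_pt {s t : ℝ} (P : Subdivision s t) {i j : ℕ} (hij : i ≤ j) (hj : j ≤ P.N) :
    P.pt i ≤ P.pt j := by
  induction j with
  | zero => simp [Nat.le_zero.mp hij]
  | succ n ih =>
    rcases Nat.lt_or_ge i (n+1) with h | h
    · exact le_trans (ih (Nat.lt_succ_iff.mp h) (le_trans (Nat.le_succ n) hj))
        (P.mono n (Nat.lt_of_lt_of_le (Nat.lt_succ_self n) hj))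
    · have : i = n + 1 := le_antisymm hij h
      simp [this]

lemma pt_nonneg (P : Subdivision 0 1) {i : ℕ} (hi : i ≤ P.N) : 0 ≤ P.pt i := by
  have := P.pt_le_pt (Nat.zero_le i) hi
  rwa [P.first] at this

lemma pt_le_one (P : Subdivision 0 1) {i : ℕ} (hi : i ≤ P.N) : P.pt i ≤ 1 := by
  have := P.pt_le_pt hi le_rfl
  rwa [P.last] at this

end Subdivision

lemma rpow_le_self_of_le_one {x q : ℝ} (hx0 : 0 ≤ x) (hx1 : x ≤ 1) (hq : 1 ≤ q) :
    x ^ q ≤ x := by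
  rcases eq_or_lt_of_le hx0 with h | h
  · rw [← h, Real.zero_rpow (by linarith : q ≠ 0)]
  · calc x ^ q ≤ x ^ (1:ℝ) := Real.rpow_le_rpow_of_exponent_ge h hx1 hq
    _ = x := Real.rpow_one x

lemma three_rpow {x y z q : ℝ} (hx : 0 ≤ x) (hy : 0 ≤ y) (hz : 0 ≤ z) (hq : 0 ≤ q) :
    (x + y + z) ^ q ≤ 3 ^ q * (x ^ q + y ^ q + z ^ q) := by
  set m := max x (max y z) with hm
  have hm0 : 0 ≤ m := le_trans hx (le_max_left _ _)
  have hsum : x + y + z ≤ 3 * m := by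
    have h1 : x ≤ m := le_max_left _ _
    have h3 : z ≤ m := le_trans (le_max_right _ _) (le_max_right _ _)
    have h2' : y ≤ m := le_trans (le_max_left y z) (le_max_right _ _)
    linarith
  have h1 : (x + y + z) ^ q ≤ (3 * m) ^ q :=
    Real.rpow_le_rpow (by linarith) hsum hq
  have h2 : (3 * m) ^ q = 3 ^ q * m ^ q := Real.mul_rpow (by norm_num) hm0
  have h3 : m ^ q ≤ x ^ q + y ^ q + z ^ q := by
    rcases max_cases x (max y z) with ⟨he, _⟩ | ⟨he, _⟩
    · rw [hm, he]
      have := Real.rpow_nonneg hy q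
      have := Real.rpow_nonneg hz q
      linarith
    · rcases max_cases y z with ⟨he2, _⟩ | ⟨he2, _⟩ <;> rw [hm, he, he2] <;>
        [skip; skip] <;>
        · have := Real.rpow_nonneg hx q
          have := Real.rpow_nonneg hy q
          have := Real.rpow_nonneg hz q
          linarith
  calc (x+y+z)^q ≤ 3^q * m^q := h2 ▸ h1
  _ ≤ 3^q * (x^q+y^q+z^q) := by
      have : (0:ℝ) ≤ 3^q := Real.rpow_nonneg (by norm_num) q
      nlinarith [h3]

lemma sum_chain_le {V : Type u} [NormedAddCommGroup V] {q : ℝ} (X : ℝ → V)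
    (B : ℝ)
    (hb : ∀ Q : Subdivision 0 1,
      ∑ i ∈ Finset.range Q.N, ‖X (Q.pt (i + 1)) - X (Q.pt i)‖ ^ q ≤ B)
    (K : ℕ) (u v : ℕ → ℝ)
    (h0 : ∀ k, k < K → 0 ≤ u k) (huv : ∀ k, k < K → u k ≤ v k)
    (h1 : ∀ k, k < K → v k ≤ 1) (hlink : ∀ k, k + 1 < K → v k ≤ u (k + 1)) :
    ∑ k ∈ Finset.range K, ‖X (v k) - X (u k)‖ ^ q ≤ B := by
  classical
  set g : ℕ → ℝ := fun n => if n = 0 then 0 else if 2*K < n then 1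
      else if n % 2 = 1 then u (n/2) else v (n/2 - 1) with hg
  have hg0 : g 0 = 0 := by simp [hg]
  have hgu : ∀ k, k < K → g (2*k+1) = u k := by
    intro k hk; simp only [hg]
    rw [if_neg (by omega), if_neg (by omega), if_pos (by omega)]
    congr 1; omega
  have hgv : ∀ k, k < K → g (2*k+2) = v k := by
    intro k hk; simp only [hg]
    rw [if_neg (by omega), if_neg (by omega), if_neg (by omega)]
    congr 1; omega
  have hg1 : ∀ n, 2*K < n → g n = 1 := by
    intro n hn; simp only [hg]; rw [if_neg (by omega), if_pos hn]
  have hmono : ∀ n, n < 2*K+2 → g n ≤ g (n+1) := by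
    intro n hn
    rcases Nat.eq_zero_or_pos n with h0' | hpos
    · subst h0'
      rw [hg0]
      rcases Nat.eq_zero_or_pos K with hK | hK
      · rw [hg1 1 (by omega)]; norm_num
      · have : (0:ℕ)+1 = 2*0+1 := by omega
        rw [this, hgu 0 hK]; exact h0 0 hK
    · by_cases h2K : 2*K < n
      · rw [hg1 n h2K, hg1 (n+1) (by omega)]
      · rcases Nat.even_or_odd n with ⟨k, hk⟩ | ⟨k, hk⟩
        · have hk' : n = 2*(k-1)+2 := by omega
          have hkK : k - 1 < K := by omega
          rw [hk', hgv (k-1) hkK]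
          by_cases hlast : 2*K < n+1
          · have : 2*(k-1)+2+1 = n+1 := by omega
            rw [this, hg1 _ hlast]; exact h1 _ hkK
          · have h2 : 2*(k-1)+2+1 = 2*(k-1+1)+1 := by omega
            rw [h2, hgu _ (by omega)]
            exact hlink _ (by omega)
        · have hkK : k < K := by omega
          have h2 : n = 2*k+1 := by omega
          rw [h2, hgu k hkK, show 2*k+1+1 = 2*k+2 by omega, hgv k hkK]
          exact huv k hkK
  set Q : Subdivision 0 1 := ⟨2*K+2, g, by omega, hg0, hg1 _ (by omega), hmono⟩ with hQ
  have key : ∑ k ∈ Finset.range K, ‖X (v k) - X (u k)‖ ^ q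
      = ∑ n ∈ (Finset.range K).image (fun k => 2*k+1), ‖X (g (n+1)) - X (g n)‖ ^ q := by
    rw [Finset.sum_image (by intro a _ b _ h; simp only at h; omega)]
    apply Finset.sum_congr rfl
    intro k hk
    have hk' := Finset.mem_range.mp hk
    rw [show 2*k+1+1 = 2*k+2 by omega, hgu k hk', hgv k hk']
  rw [key]
  calc ∑ n ∈ (Finset.range K).image (fun k => 2*k+1), ‖X (g (n+1)) - X (g n)‖ ^ q
      ≤ ∑ n ∈ Finset.range (2*K+2), ‖X (g (n+1)) - X (g n)‖ ^ q := by
        apply Finset.sum_le_sum_of_subset_of_nonneg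
        · intro n hn
          simp only [Finset.mem_image, Finset.mem_range] at hn ⊢
          obtain ⟨k, hk, rfl⟩ := hn; omega
        · intro n _ _; exact Real.rpow_nonneg (norm_nonneg _) q
    _ ≤ B := hb Q

/-- For `1 ≤ q < 2` there is a constant `c > 0` depending only on `q` such
that for every real Banach space `V`, every continuous path `X : [0,1] → V` of finite
`q`-variation and every finite partition `P` of `[0,1]`, the piecewise linear approximation
`π_P X` satisfies `‖π_P X‖_q ≤ c ‖X‖_q`. -/
theorem statement0 (q : ℝ) (hq1 : 1 ≤ q) (hq2 : q < 2) :
    ∃ c : ℝ, 0 < c ∧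
      ∀ (V : Type u) [NormedAddCommGroup V] [NormedSpace ℝ V] [CompleteSpace V],
        ∀ X Y : ℝ → V,
          ContinuousOn X (Set.Icc 0 1) → qVar q X < ⊤ →
          ∀ P : Subdivision 0 1, IsPiecewiseLinearApprox P X Y →
            qVar q Y ≤ ENNReal.ofReal c * qVar q X := by
  classical
  have hq0 : (0:ℝ) < q := by linarith
  have hqne : q ≠ 0 := ne_of_gt hq0
  refine ⟨28, by norm_num, ?_⟩
  intro V _ _ _ X Y hcont hX P hY
  set b : ℝ := (qVar q X).toReal with hbdef
  have hb0 : 0 ≤ b := ENNReal.toReal_nonneg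
  set B : ℝ := b ^ q with hBdef
  have hB0 : 0 ≤ B := Real.rpow_nonneg hb0 q
  have hSle : ∀ Q : Subdivision 0 1,
      ∑ i ∈ Finset.range Q.N, ‖X (Q.pt (i + 1)) - X (Q.pt i)‖ ^ q ≤ B := by
    intro Q
    set S := ∑ i ∈ Finset.range Q.N, ‖X (Q.pt (i + 1)) - X (Q.pt i)‖ ^ q with hSdef
    have hS0 : 0 ≤ S := Finset.sum_nonneg fun i _ => Real.rpow_nonneg (norm_nonneg _) q
    have h1 : ENNReal.ofReal (S ^ (1/q)) ≤ qVar q X := le_iSup (fun (Q : Subdivision 0 1) =>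
      ENNReal.ofReal ((∑ i ∈ Finset.range Q.N, ‖X (Q.pt (i + 1)) - X (Q.pt i)‖ ^ q) ^ (1 / q))) Q
    have h2 : S ^ (1/q) ≤ b := (ENNReal.ofReal_le_iff_le_toReal hX.ne).mp h1
    calc S = (S ^ (1/q)) ^ q := by
          rw [← Real.rpow_mul hS0, one_div, inv_mul_cancel₀ hqne, Real.rpow_one]
      _ ≤ b ^ q := Real.rpow_le_rpow (Real.rpow_nonneg hS0 _) h2 (le_of_lt hq0)
  
  -- main per-partition bound
  have hmain : ∀ D : Subdivision 0 1,
      ∑ j ∈ Finset.range D.N, ‖Y (D.pt (j+1)) - Y (D.pt j)‖ ^ q ≤ 28 * B := by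
    intro D
    set f : ℕ → ℕ := fun j => Nat.findGreatest (fun i => P.pt i ≤ D.pt j) (P.N - 1) with hf
    have hfN : ∀ j, f j < P.N := fun j =>
      lt_of_le_of_lt (Nat.findGreatest_le _) (by have := P.pos; omega)
    have hs0 : ∀ j, j ≤ D.N → 0 ≤ D.pt j := fun j hj => D.pt_nonneg hj
    have hs1 : ∀ j, j ≤ D.N → D.pt j ≤ 1 := fun j hj => D.pt_le_one hj
    have hfle : ∀ j, j ≤ D.N → P.pt (f j) ≤ D.pt j := by
      intro j hj
      have h0' : P.pt 0 ≤ D.pt j := by rw [P.first]; exact hs0 j hj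
      have h1' : P.pt (Nat.findGreatest (fun i => P.pt i ≤ D.pt j) (P.N - 1)) ≤ D.pt j :=
        Nat.findGreatest_spec (P := fun i => P.pt i ≤ D.pt j) (Nat.zero_le _) h0'
      exact h1'
    have hfge : ∀ j, j ≤ D.N → D.pt j ≤ P.pt (f j + 1) := by
      intro j hj
      by_cases h : f j = P.N - 1
      · rw [h, show P.N - 1 + 1 = P.N by have := P.pos; omega, P.last]; exact hs1 j hj
      · have hle : f j ≤ P.N - 1 := Nat.findGreatest_le _
        have hgr := Nat.findGreatest_is_greatest (k := f j + 1)
          (P := fun i => P.pt i ≤ D.pt j) (n := P.N - 1) (Nat.lt_succ_self _) (by omega)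
        exact (not_le.mp hgr).le
    have hfmono : ∀ j j', j ≤ j' → j' ≤ D.N → f j ≤ f j' := by
      intro j j' hjj' hj'
      exact Nat.le_findGreatest (Nat.findGreatest_le _)
        (le_trans (hfle j (le_trans hjj' hj')) (D.pt_le_pt hjj' hj'))
    have hYj : ∀ j, j ≤ D.N → Y (D.pt j) = X (P.pt (f j))
        + ((D.pt j - P.pt (f j)) / (P.pt (f j + 1) - P.pt (f j)))
          • (X (P.pt (f j + 1)) - X (P.pt (f j))) :=
      fun j hj => hY (f j) (hfN j) (D.pt j) (hfle j hj) (hfge j hj)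
    have hden : ∀ j, 0 ≤ P.pt (f j + 1) - P.pt (f j) := fun j =>
      sub_nonneg.mpr (P.pt_le_pt (Nat.le_succ _) (hfN j))
    have hlam0 : ∀ j, j ≤ D.N → 0 ≤ (D.pt j - P.pt (f j)) / (P.pt (f j + 1) - P.pt (f j)) :=
      fun j hj => div_nonneg (sub_nonneg.mpr (hfle j hj)) (hden j)
    have hlam1 : ∀ j, j ≤ D.N → (D.pt j - P.pt (f j)) / (P.pt (f j + 1) - P.pt (f j)) ≤ 1 := by
      intro j hj
      rcases eq_or_lt_of_le (hden j) with h | h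
      · rw [← h, div_zero]; norm_num
      · rw [div_le_one h]; have := hfge j hj; linarith
    set Jn := (Finset.range D.N).filter (fun j => f j = f (j+1)) with hJndef
    set Jc := (Finset.range D.N).filter (fun j => ¬ f j = f (j+1)) with hJcdef
    set mu : ℕ → ℝ := fun j => (D.pt (j+1) - D.pt j) / (P.pt (f j + 1) - P.pt (f j)) with hmu
    have hmu0 : ∀ j, j < D.N → 0 ≤ mu j := fun j hj =>
      div_nonneg (sub_nonneg.mpr (D.mono j hj)) (hden j)
    have hmu1 : ∀ j, j < D.N → f (j+1) = f j → mu j ≤ 1 := by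
      intro j hj hfeq
      rcases eq_or_lt_of_le (hden j) with h | h
      · show (D.pt (j+1) - D.pt j) / (P.pt (f j + 1) - P.pt (f j)) ≤ 1
        rw [← h, div_zero]; norm_num
      · show (D.pt (j+1) - D.pt j) / (P.pt (f j + 1) - P.pt (f j)) ≤ 1
        rw [div_le_one h]
        have hA := hfle j (le_of_lt hj)
        have hB := hfge (j+1) hj
        rw [hfeq] at hB
        linarith
    have hid : ∀ j, j < D.N → f j = f (j+1) →
        Y (D.pt (j+1)) - Y (D.pt j) = mu j • (X (P.pt (f j + 1)) - X (P.pt (f j))) := by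
      intro j hj hfeq
      have h1 := hYj j (le_of_lt hj)
      have h2 := hYj (j+1) hj
      rw [← hfeq] at h2
      have hsc : (D.pt (j+1) - P.pt (f j)) / (P.pt (f j + 1) - P.pt (f j))
          - (D.pt j - P.pt (f j)) / (P.pt (f j + 1) - P.pt (f j)) = mu j := by
        rw [div_sub_div_same, sub_sub_sub_cancel_right]
      rw [h1, h2, ← hsc, sub_smul]
      abel
    have hcross : ∀ j, j < D.N → f j < f (j+1) →
        ‖Y (D.pt (j+1)) - Y (D.pt j)‖
          ≤ ‖X (P.pt (f j + 1)) - X (P.pt (f j))‖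
            + ‖X (P.pt (f (j+1))) - X (P.pt (f j + 1))‖
            + ‖X (P.pt (f (j+1) + 1)) - X (P.pt (f (j+1)))‖ := by
      intro j hj hlt
      have h1 := hYj j (le_of_lt hj)
      have h2 := hYj (j+1) hj
      have hid2 : Y (D.pt (j+1)) - Y (D.pt j) =
          (1 - (D.pt j - P.pt (f j)) / (P.pt (f j + 1) - P.pt (f j)))
              • (X (P.pt (f j + 1)) - X (P.pt (f j)))
          + (X (P.pt (f (j+1))) - X (P.pt (f j + 1)))
          + ((D.pt (j+1) - P.pt (f (j+1))) / (P.pt (f (j+1) + 1) - P.pt (f (j+1))))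
              • (X (P.pt (f (j+1) + 1)) - X (P.pt (f (j+1)))) := by
        rw [h1, h2]; module
      rw [hid2]
      refine le_trans (norm_add₃_le) ?_
      have e1 : ‖(1 - (D.pt j - P.pt (f j)) / (P.pt (f j + 1) - P.pt (f j)))
          • (X (P.pt (f j + 1)) - X (P.pt (f j)))‖
          ≤ ‖X (P.pt (f j + 1)) - X (P.pt (f j))‖ := by
        rw [norm_smul, Real.norm_eq_abs,
          abs_of_nonneg (by have := hlam1 j (le_of_lt hj); linarith)]
        have := hlam0 j (le_of_lt hj)
        exact mul_le_of_le_one_left (norm_nonneg _) (by linarith)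
      have e3 : ‖((D.pt (j+1) - P.pt (f (j+1))) / (P.pt (f (j+1) + 1) - P.pt (f (j+1))))
          • (X (P.pt (f (j+1) + 1)) - X (P.pt (f (j+1))))‖
          ≤ ‖X (P.pt (f (j+1) + 1)) - X (P.pt (f (j+1)))‖ := by
        rw [norm_smul, Real.norm_eq_abs, abs_of_nonneg (hlam0 (j+1) hj)]
        exact mul_le_of_le_one_left (norm_nonneg _) (hlam1 (j+1) hj)
      linarith
    -- split the sum
    rw [← Finset.sum_filter_add_sum_filter_not (Finset.range D.N) (fun j => f j = f (j+1))]
    have hJn : ∑ j ∈ Jn, ‖Y (D.pt (j+1)) - Y (D.pt j)‖ ^ q ≤ B := by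
      have hJnmem : ∀ j ∈ Jn, j < D.N ∧ f j = f (j+1) := by
        intro j hj
        rw [hJndef, Finset.mem_filter, Finset.mem_range] at hj
        exact hj
      have hterm : ∀ j ∈ Jn, ‖Y (D.pt (j+1)) - Y (D.pt j)‖ ^ q
          = mu j ^ q * ‖X (P.pt (f j + 1)) - X (P.pt (f j))‖ ^ q := by
        intro j hj
        obtain ⟨hjM, hfeq⟩ := hJnmem j hj
        rw [hid j hjM hfeq, norm_smul, Real.norm_eq_abs, abs_of_nonneg (hmu0 j hjM),
          Real.mul_rpow (hmu0 j hjM) (norm_nonneg _)]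
      rw [Finset.sum_congr rfl hterm]
      rw [← Finset.sum_fiberwise_of_maps_to (t := Finset.range P.N)
        (fun j (hj : j ∈ Jn) => Finset.mem_range.mpr (hfN j))
        (fun j => mu j ^ q * ‖X (P.pt (f j + 1)) - X (P.pt (f j))‖ ^ q)]
      have hfiber : ∀ i ∈ Finset.range P.N,
          ∑ j ∈ Jn.filter (fun j => f j = i),
              mu j ^ q * ‖X (P.pt (f j + 1)) - X (P.pt (f j))‖ ^ q
            ≤ ‖X (P.pt (i + 1)) - X (P.pt i)‖ ^ q := by
        intro i hi
        have hFimem : ∀ j ∈ Jn.filter (fun j => f j = i),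
            j < D.N ∧ f j = f (j+1) ∧ f j = i := by
          intro j hj
          rw [Finset.mem_filter] at hj
          obtain ⟨hj1, hj2⟩ := hj
          obtain ⟨hjM, hfeq⟩ := hJnmem j hj1
          exact ⟨hjM, hfeq, hj2⟩
        have hterm2 : ∀ j ∈ Jn.filter (fun j => f j = i),
            mu j ^ q * ‖X (P.pt (f j + 1)) - X (P.pt (f j))‖ ^ q
            = mu j ^ q * ‖X (P.pt (i + 1)) - X (P.pt i)‖ ^ q := by
          intro j hj
          rw [(hFimem j hj).2.2]
        rw [Finset.sum_congr rfl hterm2, ← Finset.sum_mul]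
        have hXq0 : 0 ≤ ‖X (P.pt (i + 1)) - X (P.pt i)‖ ^ q :=
          Real.rpow_nonneg (norm_nonneg _) q
        have hsum_mu : ∑ j ∈ Jn.filter (fun j => f j = i), mu j ^ q ≤ 1 := by
          have hmuq : ∀ j ∈ Jn.filter (fun j => f j = i), mu j ^ q ≤ mu j := by
            intro j hj
            obtain ⟨hjM, hfeq, _⟩ := hFimem j hj
            exact rpow_le_self_of_le_one (hmu0 j hjM) (hmu1 j hjM hfeq.symm) hq1
          refine le_trans (Finset.sum_le_sum hmuq) ?_
          rcases Finset.eq_empty_or_nonempty (Jn.filter (fun j => f j = i)) with he | hne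
          · rw [he]; simp
          · set Fi := Jn.filter (fun j => f j = i) with hFidef
            set m := Fi.min' hne with hmdef
            set k := Fi.max' hne with hkdef
            have hmem_m : m ∈ Fi := Finset.min'_mem _ _
            have hmem_k : k ∈ Fi := Finset.max'_mem _ _
            have hkM : k < D.N := (hFimem k hmem_k).1
            have hmM : m < D.N := (hFimem m hmem_m).1
            have hsub : Fi ⊆ Finset.Ico m (k+1) := fun j hj => Finset.mem_Ico.mpr
              ⟨Fi.min'_le j hj, Nat.lt_succ_of_le (Fi.le_max' j hj)⟩
            have hmk : m ≤ k := Fi.min'_le k hmem_k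
            rcases eq_or_lt_of_le (sub_nonneg.mpr
                (P.pt_le_pt (Nat.le_succ i) (Finset.mem_range.mp hi))) with hd | hd
            · have hz : ∀ j ∈ Fi, mu j = 0 := by
                intro j hj
                have hfj : f j = i := (hFimem j hj).2.2
                show (D.pt (j+1) - D.pt j) / (P.pt (f j + 1) - P.pt (f j)) = 0
                rw [hfj, ← hd, div_zero]
              rw [Finset.sum_congr rfl hz]; simp
            · have hnum : ∑ j ∈ Fi, (D.pt (j+1) - D.pt j) ≤ P.pt (i+1) - P.pt i := by
                have step1 : ∑ j ∈ Fi, (D.pt (j+1) - D.pt j)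
                    ≤ ∑ j ∈ Finset.Ico m (k+1), (D.pt (j+1) - D.pt j) := by
                  apply Finset.sum_le_sum_of_subset_of_nonneg hsub
                  intro j hj _
                  have hjk : j < k + 1 := (Finset.mem_Ico.mp hj).2
                  exact sub_nonneg.mpr (D.mono j (by omega))
                have step2 : ∑ j ∈ Finset.Ico m (k+1), (D.pt (j+1) - D.pt j)
                    = D.pt (k+1) - D.pt m := by
                  rw [Finset.sum_Ico_eq_sub _ (by omega : m ≤ k+1),
                    Finset.sum_range_sub (fun n => D.pt n),
                    Finset.sum_range_sub (fun n => D.pt n)]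
                  ring
                have h1 : P.pt i ≤ D.pt m := by
                  have := hfle m (le_of_lt hmM)
                  rwa [(hFimem m hmem_m).2.2] at this
                have h2 : D.pt (k+1) ≤ P.pt (i+1) := by
                  have := hfge (k+1) hkM
                  rwa [← (hFimem k hmem_k).2.1, (hFimem k hmem_k).2.2] at this
                linarith
              have hrw : ∑ j ∈ Fi, mu j
                  = (∑ j ∈ Fi, (D.pt (j+1) - D.pt j)) / (P.pt (i+1) - P.pt i) := by
                rw [Finset.sum_div]
                apply Finset.sum_congr rfl
                intro j hj
                show (D.pt (j+1) - D.pt j) / (P.pt (f j + 1) - P.pt (f j)) = _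
                rw [(hFimem j hj).2.2]
              rw [hrw, div_le_one hd]
              exact hnum
        calc (∑ j ∈ Jn.filter (fun j => f j = i), mu j ^ q)
              * ‖X (P.pt (i + 1)) - X (P.pt i)‖ ^ q
            ≤ 1 * ‖X (P.pt (i + 1)) - X (P.pt i)‖ ^ q :=
              mul_le_mul_of_nonneg_right hsum_mu hXq0
          _ = ‖X (P.pt (i + 1)) - X (P.pt i)‖ ^ q := one_mul _
      calc ∑ i ∈ Finset.range P.N, ∑ j ∈ Jn.filter (fun j => f j = i),
              mu j ^ q * ‖X (P.pt (f j + 1)) - X (P.pt (f j))‖ ^ q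
          ≤ ∑ i ∈ Finset.range P.N, ‖X (P.pt (i + 1)) - X (P.pt i)‖ ^ q :=
            Finset.sum_le_sum hfiber
        _ ≤ B := hSle P
    have hJc : ∑ j ∈ Jc, ‖Y (D.pt (j+1)) - Y (D.pt j)‖ ^ q ≤ 27 * B := by
      have hJcmem : ∀ j ∈ Jc, j < D.N ∧ f j < f (j+1) := by
        intro j hj
        rw [hJcdef, Finset.mem_filter, Finset.mem_range] at hj
        exact ⟨hj.1, lt_of_le_of_ne (hfmono j (j+1) (Nat.le_succ j) hj.1) hj.2⟩
      -- enumeration of Jc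
      set K' := Jc.card with hK'
      set E : ℕ → ℕ := fun k => if h : k < K' then (Jc.orderEmbOfFin rfl) ⟨k, h⟩ else 0 with hE
      have hEmem : ∀ k, k < K' → E k ∈ Jc := by
        intro k hk
        show (if h : k < K' then (Jc.orderEmbOfFin rfl) ⟨k, h⟩ else 0) ∈ Jc
        rw [dif_pos hk]
        exact Finset.orderEmbOfFin_mem _ _ _
      have hElt : ∀ k k', k < k' → k' < K' → E k < E k' := by
        intro k k' hkk' hk'
        show (if h : k < K' then (Jc.orderEmbOfFin rfl) ⟨k, h⟩ else 0)
          < (if h : k' < K' then (Jc.orderEmbOfFin rfl) ⟨k', h⟩ else 0)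
        rw [dif_pos (lt_trans hkk' hk'), dif_pos hk']
        exact (Jc.orderEmbOfFin rfl).strictMono (show (⟨k, _⟩ : Fin K') < ⟨k', _⟩ from hkk')
      have hinj : ∀ x ∈ Finset.range K', ∀ y ∈ Finset.range K', E x = E y → x = y := by
        intro x hx y hy hxy
        by_contra h
        rcases lt_or_gt_of_ne h with hl | hl
        · exact absurd hxy (ne_of_lt (hElt x y hl (Finset.mem_range.mp hy)))
        · exact absurd hxy.symm (ne_of_lt (hElt y x hl (Finset.mem_range.mp hx)))
      have hsumE : ∀ F : ℕ → ℝ, ∑ j ∈ Jc, F j = ∑ k ∈ Finset.range K', F (E k) := by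
        intro F
        have himg : (Finset.range K').image E = Jc := by
          apply Finset.eq_of_subset_of_card_le
          · intro j hj
            obtain ⟨k, hk, rfl⟩ := Finset.mem_image.mp hj
            exact hEmem k (Finset.mem_range.mp hk)
          · rw [Finset.card_image_of_injOn (fun x hx y hy => hinj x hx y hy),
              Finset.card_range]
        rw [← himg, Finset.sum_image hinj]
      -- per-term bound
      have hterm3 : ∀ j ∈ Jc, ‖Y (D.pt (j+1)) - Y (D.pt j)‖ ^ q
          ≤ 3 ^ q * (‖X (P.pt (f j + 1)) - X (P.pt (f j))‖ ^ q
            + ‖X (P.pt (f (j+1))) - X (P.pt (f j + 1))‖ ^ q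
            + ‖X (P.pt (f (j+1) + 1)) - X (P.pt (f (j+1)))‖ ^ q) := by
        intro j hj
        obtain ⟨hjM, hlt⟩ := hJcmem j hj
        calc ‖Y (D.pt (j+1)) - Y (D.pt j)‖ ^ q
            ≤ (‖X (P.pt (f j + 1)) - X (P.pt (f j))‖
              + ‖X (P.pt (f (j+1))) - X (P.pt (f j + 1))‖
              + ‖X (P.pt (f (j+1) + 1)) - X (P.pt (f (j+1)))‖) ^ q :=
              Real.rpow_le_rpow (norm_nonneg _) (hcross j hjM hlt) (le_of_lt hq0)
          _ ≤ _ := three_rpow (norm_nonneg _) (norm_nonneg _) (norm_nonneg _) (le_of_lt hq0)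
      -- the three chain sums
      have hA : ∑ j ∈ Jc, ‖X (P.pt (f j + 1)) - X (P.pt (f j))‖ ^ q ≤ B := by
        rw [hsumE (fun j => ‖X (P.pt (f j + 1)) - X (P.pt (f j))‖ ^ q)]
        apply sum_chain_le X B hSle K' (fun k => P.pt (f (E k))) (fun k => P.pt (f (E k) + 1))
        · intro k hk; exact P.pt_nonneg (le_of_lt (hfN _))
        · intro k hk; exact P.pt_le_pt (Nat.le_succ _) (hfN _)
        · intro k hk; exact P.pt_le_one (hfN _)
        · intro k hk1
          have hk : k < K' := by omega
          have hEk1 : E k < E (k+1) := hElt k (k+1) (Nat.lt_succ_self k) hk1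
          have hEkM : E k < D.N := (hJcmem _ (hEmem k hk)).1
          have hEk1M : E (k+1) < D.N := (hJcmem _ (hEmem (k+1) hk1)).1
          have h3 : f (E k) < f (E k + 1) := (hJcmem _ (hEmem k hk)).2
          have h2 : f (E k + 1) ≤ f (E (k+1)) := hfmono _ _ (by omega) (le_of_lt hEk1M)
          exact P.pt_le_pt (by omega) (le_of_lt (hfN _))
      have hBs : ∑ j ∈ Jc, ‖X (P.pt (f (j+1))) - X (P.pt (f j + 1))‖ ^ q ≤ B := by
        rw [hsumE (fun j => ‖X (P.pt (f (j+1))) - X (P.pt (f j + 1))‖ ^ q)]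
        apply sum_chain_le X B hSle K' (fun k => P.pt (f (E k) + 1)) (fun k => P.pt (f (E k + 1)))
        · intro k hk; exact P.pt_nonneg (hfN _)
        · intro k hk
          have h3 : f (E k) < f (E k + 1) := (hJcmem _ (hEmem k hk)).2
          exact P.pt_le_pt (by omega) (le_of_lt (hfN _))
        · intro k hk; exact P.pt_le_one (le_of_lt (hfN _))
        · intro k hk1
          have hk : k < K' := by omega
          have hEk1 : E k < E (k+1) := hElt k (k+1) (Nat.lt_succ_self k) hk1
          have hEk1M : E (k+1) < D.N := (hJcmem _ (hEmem (k+1) hk1)).1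
          have h2 : f (E k + 1) ≤ f (E (k+1)) := hfmono _ _ (by omega) (le_of_lt hEk1M)
          exact P.pt_le_pt (by omega) (hfN _)
      have hC : ∑ j ∈ Jc, ‖X (P.pt (f (j+1) + 1)) - X (P.pt (f (j+1)))‖ ^ q ≤ B := by
        rw [hsumE (fun j => ‖X (P.pt (f (j+1) + 1)) - X (P.pt (f (j+1)))‖ ^ q)]
        apply sum_chain_le X B hSle K' (fun k => P.pt (f (E k + 1)))
          (fun k => P.pt (f (E k + 1) + 1))
        · intro k hk; exact P.pt_nonneg (le_of_lt (hfN _))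
        · intro k hk; exact P.pt_le_pt (Nat.le_succ _) (hfN _)
        · intro k hk; exact P.pt_le_one (hfN _)
        · intro k hk1
          have hk : k < K' := by omega
          have hEk1 : E k < E (k+1) := hElt k (k+1) (Nat.lt_succ_self k) hk1
          have hEk1M : E (k+1) < D.N := (hJcmem _ (hEmem (k+1) hk1)).1
          have h2 : f (E k + 1) ≤ f (E (k+1)) := hfmono _ _ (by omega) (le_of_lt hEk1M)
          have h3 : f (E (k+1)) < f (E (k+1) + 1) := (hJcmem _ (hEmem (k+1) hk1)).2
          exact P.pt_le_pt (by omega) (le_of_lt (hfN _))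
      have h3q : (3:ℝ) ^ q ≤ 9 := by
        calc (3:ℝ) ^ q ≤ 3 ^ (2:ℝ) :=
            Real.rpow_le_rpow_of_exponent_le (by norm_num) (le_of_lt hq2)
          _ = 9 := by
            rw [show (2:ℝ) = ((2:ℕ):ℝ) by norm_num, Real.rpow_natCast]; norm_num
      have h3q0 : (0:ℝ) ≤ 3 ^ q := Real.rpow_nonneg (by norm_num) q
      calc ∑ j ∈ Jc, ‖Y (D.pt (j+1)) - Y (D.pt j)‖ ^ q
          ≤ ∑ j ∈ Jc, 3 ^ q * (‖X (P.pt (f j + 1)) - X (P.pt (f j))‖ ^ q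
            + ‖X (P.pt (f (j+1))) - X (P.pt (f j + 1))‖ ^ q
            + ‖X (P.pt (f (j+1) + 1)) - X (P.pt (f (j+1)))‖ ^ q) :=
            Finset.sum_le_sum hterm3
        _ = 3 ^ q * (∑ j ∈ Jc, ‖X (P.pt (f j + 1)) - X (P.pt (f j))‖ ^ q
            + ∑ j ∈ Jc, ‖X (P.pt (f (j+1))) - X (P.pt (f j + 1))‖ ^ q
            + ∑ j ∈ Jc, ‖X (P.pt (f (j+1) + 1)) - X (P.pt (f (j+1)))‖ ^ q) := by
            rw [← Finset.mul_sum, Finset.sum_add_distrib, Finset.sum_add_distrib]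
        _ ≤ 27 * B := by nlinarith [hA, hBs, hC, hB0, h3q, h3q0]
    have hsplit : (Finset.range D.N).filter (fun j => f j = f (j+1)) = Jn := rfl
    have hsplit2 : (Finset.range D.N).filter (fun j => ¬ f j = f (j+1)) = Jc := rfl
    rw [hsplit, hsplit2]
    linarith

  have hfin : qVar q Y ≤ ENNReal.ofReal (28 * b) := by
    apply iSup_le
    intro D
    apply ENNReal.ofReal_le_ofReal
    set T := ∑ j ∈ Finset.range D.N, ‖Y (D.pt (j+1)) - Y (D.pt j)‖ ^ q with hT
    have hT0 : 0 ≤ T := Finset.sum_nonneg fun j _ => Real.rpow_nonneg (norm_nonneg _) q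
    have h28 : T ≤ (28 * b) ^ q := by
      have h1 : (28 * b : ℝ) ^ q = 28 ^ q * b ^ q := Real.mul_rpow (by norm_num) hb0
      have h2 : (28:ℝ) ≤ 28 ^ q := by
        calc (28:ℝ) = 28 ^ (1:ℝ) := (Real.rpow_one _).symm
        _ ≤ 28 ^ q := Real.rpow_le_rpow_of_exponent_le (by norm_num) hq1
      have := hmain D
      rw [h1]
      nlinarith [hB0]
    calc T ^ (1/q) ≤ ((28 * b) ^ q) ^ (1/q) :=
          Real.rpow_le_rpow hT0 h28 (by positivity)
      _ = 28 * b := by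
          rw [← Real.rpow_mul (by positivity), mul_one_div, div_self hqne, Real.rpow_one]
  calc qVar q Y ≤ ENNReal.ofReal (28 * b) := hfin
    _ = ENNReal.ofReal 28 * ENNReal.ofReal b := ENNReal.ofReal_mul (by norm_num)
    _ = ENNReal.ofReal 28 * qVar q X := by rw [hbdef, ENNReal.ofReal_toReal hX.ne]
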